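/- arXiv:2501.03232 — 2 statements merged into one kernel-verified Lean document; each statement's English description precedes it below -/
import Mathlib

section
/- The localization sum over the six 2-element subsets I = {i1 < i2} of {1,2,3,4} of ∏_{a=0}^{3}(a·λ_{i1} + (3−a)·λ_{i2}) divided by ∏_{i∈I, j∉I}(λ_i − λ_j) equals 27, for generic λ_1, λ_2, λ_3, λ_4. -/
open Finset

set_option maxHeartbeats 1000000 in
/-- Localization computation of the 27 lines on a cubic surface:
the sum over 2-element subsets `{i < j}` of `{1,2,3,4}` of
`∏_{a=0}^{3} (a λᵢ + (3-a) λⱼ) / ∏_{m ∈ {i,j}, k ∉ {i,j}} (λ_m - λ_k)`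
equals `27`. -/
theorem localization_27_lines {K : Type*} [Field K] [CharZero K]
    (l : Fin 4 → K) (hl : Function.Injective l) :
    (∑ i : Fin 4, ∑ j ∈ Finset.Ioi i,
      (∏ a ∈ Finset.range 4, ((a : K) * l i + ((3 - a : ℕ) : K) * l j)) /
        ∏ k ∈ (Finset.univ \ {i, j} : Finset (Fin 4)),
          ((l i - l k) * (l j - l k))) = 27 := by
  have ne : ∀ i j : Fin 4, i ≠ j → l i - l j ≠ 0 := fun i j h =>
    sub_ne_zero.2 (fun e => h (hl e))
  rw [Fin.sum_univ_four]
  rw [show (Finset.Ioi (0:Fin 4)) = {1,2,3} from by decide,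
      show (Finset.Ioi (1:Fin 4)) = {2,3} from by decide,
      show (Finset.Ioi (2:Fin 4)) = {3} from by decide,
      show (Finset.Ioi (3:Fin 4)) = ∅ from by decide]
  rw [Finset.sum_insert (show (1:Fin 4) ∉ ({2,3}:Finset (Fin 4)) by decide),
      Finset.sum_pair (show (2:Fin 4) ≠ 3 by decide),
      Finset.sum_pair (show (2:Fin 4) ≠ 3 by decide),
      Finset.sum_singleton, Finset.sum_empty]
  rw [show ((Finset.univ \ {0, 1}) : Finset (Fin 4)) = {2,3} from by decide,
      show ((Finset.univ \ {0, 2}) : Finset (Fin 4)) = {1,3} from by decide,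
      show ((Finset.univ \ {0, 3}) : Finset (Fin 4)) = {1,2} from by decide,
      show ((Finset.univ \ {1, 2}) : Finset (Fin 4)) = {0,3} from by decide,
      show ((Finset.univ \ {1, 3}) : Finset (Fin 4)) = {0,2} from by decide,
      show ((Finset.univ \ {2, 3}) : Finset (Fin 4)) = {0,1} from by decide]
  simp only [Finset.prod_pair (show (2:Fin 4) ≠ 3 by decide),
    Finset.prod_pair (show (1:Fin 4) ≠ 3 by decide),
    Finset.prod_pair (show (1:Fin 4) ≠ 2 by decide),
    Finset.prod_pair (show (0:Fin 4) ≠ 3 by decide),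
    Finset.prod_pair (show (0:Fin 4) ≠ 2 by decide),
    Finset.prod_pair (show (0:Fin 4) ≠ 1 by decide),
    Finset.prod_range_succ, Finset.prod_range_zero]
  set a := l 0 with ha; set b := l 1 with hb; set c := l 2 with hc; set d := l 3 with hd
  norm_num
  have h01 : a - b ≠ 0 := ne 0 1 (by decide)
  have h02 : a - c ≠ 0 := ne 0 2 (by decide)
  have h03 : a - d ≠ 0 := ne 0 3 (by decide)
  have h12 : b - c ≠ 0 := ne 1 2 (by decide)
  have h13 : b - d ≠ 0 := ne 1 3 (by decide)
  have h23 : c - d ≠ 0 := ne 2 3 (by decide)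
  have h10 : b - a ≠ 0 := ne 1 0 (by decide)
  have h20 : c - a ≠ 0 := ne 2 0 (by decide)
  have h30 : d - a ≠ 0 := ne 3 0 (by decide)
  have h21 : c - b ≠ 0 := ne 2 1 (by decide)
  have h31 : d - b ≠ 0 := ne 3 1 (by decide)
  have h32 : d - c ≠ 0 := ne 3 2 (by decide)
  set D : K := (a-b)*(a-c)*(a-d)*(b-c)*(b-d)*(c-d) with hD
  have hDne : D ≠ 0 := by
    rw [hD]
    exact mul_ne_zero (mul_ne_zero (mul_ne_zero (mul_ne_zero (mul_ne_zero h01 h02) h03) h12) h13) h23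
  rw [show 3 * b * (a + 2 * b) * (2 * a + b) * (3 * a) / ((a - c) * (b - c) * ((a - d) * (b - d)))
      = 3 * b * (a + 2 * b) * (2 * a + b) * (3 * a) * ((a-b)*(c-d)) / D from by
        rw [div_eq_div_iff (mul_ne_zero (mul_ne_zero h02 h12) (mul_ne_zero h03 h13)) hDne, hD]; ring,
      show 3 * c * (a + 2 * c) * (2 * a + c) * (3 * a) / ((a - b) * (c - b) * ((a - d) * (c - d)))
      = 3 * c * (a + 2 * c) * (2 * a + c) * (3 * a) * (-((a-c)*(b-d))) / D from by
        rw [div_eq_div_iff (mul_ne_zero (mul_ne_zero h01 h21) (mul_ne_zero h03 h23)) hDne, hD]; ring,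
      show 3 * d * (a + 2 * d) * (2 * a + d) * (3 * a) / ((a - b) * (d - b) * ((a - c) * (d - c)))
      = 3 * d * (a + 2 * d) * (2 * a + d) * (3 * a) * ((a-d)*(b-c)) / D from by
        rw [div_eq_div_iff (mul_ne_zero (mul_ne_zero h01 h31) (mul_ne_zero h02 h32)) hDne, hD]; ring,
      show 3 * c * (b + 2 * c) * (2 * b + c) * (3 * b) / ((b - a) * (c - a) * ((b - d) * (c - d)))
      = 3 * c * (b + 2 * c) * (2 * b + c) * (3 * b) * ((a-d)*(b-c)) / D from by
        rw [div_eq_div_iff (mul_ne_zero (mul_ne_zero h10 h20) (mul_ne_zero h13 h23)) hDne, hD]; ring,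
      show 3 * d * (b + 2 * d) * (2 * b + d) * (3 * b) / ((b - a) * (d - a) * ((b - c) * (d - c)))
      = 3 * d * (b + 2 * d) * (2 * b + d) * (3 * b) * (-((a-c)*(b-d))) / D from by
        rw [div_eq_div_iff (mul_ne_zero (mul_ne_zero h10 h30) (mul_ne_zero h12 h32)) hDne, hD]; ring,
      show 3 * d * (c + 2 * d) * (2 * c + d) * (3 * c) / ((c - a) * (d - a) * ((c - b) * (d - b)))
      = 3 * d * (c + 2 * d) * (2 * c + d) * (3 * c) * ((a-b)*(c-d)) / D from by
        rw [div_eq_div_iff (mul_ne_zero (mul_ne_zero h20 h30) (mul_ne_zero h21 h31)) hDne, hD]; ring]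
  rw [← add_div, ← add_div, ← add_div, ← add_div, ← add_div,
      div_eq_iff hDne, hD]
  ring
end

section
/- The localization sum over the ten 2-element subsets I = {i1 < i2} of {1,...,5} of ∏_{a=0}^{5}(a·λ_{i1} + (5−a)·λ_{i2}) divided by ∏_{i∈I, j∉I}(λ_i − λ_j) equals 2875, for pairwise distinct λ_1,...,λ_5. -/
open Finset

set_option maxHeartbeats 2000000 in
/-- Localization computation of the 2875 lines on a quintic threefold:
the sum over 2-element subsets `{i < j}` of `{1,…,5}` of
`∏_{a=0}^{5} (a λᵢ + (5-a) λⱼ) / ∏_{m ∈ {i,j}, k ∉ {i,j}} (λ_m - λ_k)`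
equals `2875`. -/
theorem localization_2875_lines {K : Type*} [Field K] [CharZero K]
    (l : Fin 5 → K) (hl : Function.Injective l) :
    (∑ i : Fin 5, ∑ j ∈ Finset.Ioi i,
      (∏ a ∈ Finset.range 6, ((a : K) * l i + ((5 - a : ℕ) : K) * l j)) /
        ∏ k ∈ (Finset.univ \ {i, j} : Finset (Fin 5)),
          ((l i - l k) * (l j - l k))) = 2875 := by
  have h : ∀ i j : Fin 5, i ≠ j → l i - l j ≠ 0 := fun i j hij =>
    sub_ne_zero.2 fun h => hij (hl h)
  simp only [Fin.sum_univ_five,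
    show Ioi (0:Fin 5) = {1,2,3,4} from rfl,
    show Ioi (1:Fin 5) = {2,3,4} from rfl,
    show Ioi (2:Fin 5) = {3,4} from rfl,
    show Ioi (3:Fin 5) = {4} from rfl,
    show Ioi (4:Fin 5) = (∅ : Finset (Fin 5)) from rfl]
  simp [Finset.sum_insert, Finset.prod_insert, Finset.sum_singleton, Finset.prod_singleton,
    show ((univ \ {0,1}) : Finset (Fin 5)) = {2,3,4} from rfl,
    show ((univ \ {0,2}) : Finset (Fin 5)) = {1,3,4} from rfl,
    show ((univ \ {0,3}) : Finset (Fin 5)) = {1,2,4} from rfl,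
    show ((univ \ {0,4}) : Finset (Fin 5)) = {1,2,3} from rfl,
    show ((univ \ {1,2}) : Finset (Fin 5)) = {0,3,4} from rfl,
    show ((univ \ {1,3}) : Finset (Fin 5)) = {0,2,4} from rfl,
    show ((univ \ {1,4}) : Finset (Fin 5)) = {0,2,3} from rfl,
    show ((univ \ {2,3}) : Finset (Fin 5)) = {0,1,4} from rfl,
    show ((univ \ {2,4}) : Finset (Fin 5)) = {0,1,3} from rfl,
    show ((univ \ {3,4}) : Finset (Fin 5)) = {0,1,2} from rfl]
  norm_num [Finset.prod_range_succ]
  have h01 : l 0 - l 1 ≠ 0 := h 0 1 (by decide)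
  have h02 : l 0 - l 2 ≠ 0 := h 0 2 (by decide)
  have h03 : l 0 - l 3 ≠ 0 := h 0 3 (by decide)
  have h04 : l 0 - l 4 ≠ 0 := h 0 4 (by decide)
  have h10 : l 1 - l 0 ≠ 0 := h 1 0 (by decide)
  have h12 : l 1 - l 2 ≠ 0 := h 1 2 (by decide)
  have h13 : l 1 - l 3 ≠ 0 := h 1 3 (by decide)
  have h14 : l 1 - l 4 ≠ 0 := h 1 4 (by decide)
  have h20 : l 2 - l 0 ≠ 0 := h 2 0 (by decide)
  have h21 : l 2 - l 1 ≠ 0 := h 2 1 (by decide)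
  have h23 : l 2 - l 3 ≠ 0 := h 2 3 (by decide)
  have h24 : l 2 - l 4 ≠ 0 := h 2 4 (by decide)
  have h30 : l 3 - l 0 ≠ 0 := h 3 0 (by decide)
  have h31 : l 3 - l 1 ≠ 0 := h 3 1 (by decide)
  have h32 : l 3 - l 2 ≠ 0 := h 3 2 (by decide)
  have h34 : l 3 - l 4 ≠ 0 := h 3 4 (by decide)
  have h40 : l 4 - l 0 ≠ 0 := h 4 0 (by decide)
  have h41 : l 4 - l 1 ≠ 0 := h 4 1 (by decide)
  have h42 : l 4 - l 2 ≠ 0 := h 4 2 (by decide)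
  have h43 : l 4 - l 3 ≠ 0 := h 4 3 (by decide)
  have hV : ((l 0 - l 1) * (l 0 - l 2) * (l 0 - l 3) * (l 0 - l 4) * (l 1 - l 2) * (l 1 - l 3) * (l 1 - l 4) * (l 2 - l 3) * (l 2 - l 4) * (l 3 - l 4)) ≠ 0 := mul_ne_zero (mul_ne_zero (mul_ne_zero (mul_ne_zero (mul_ne_zero (mul_ne_zero (mul_ne_zero (mul_ne_zero (mul_ne_zero (h01) h02) h03) h04) h12) h13) h14) h23) h24) h34
  have e01 : 5 * l 1 * (l 0 + 4 * l 1) * (2 * l 0 + 3 * l 1) * (3 * l 0 + 2 * l 1) * (4 * l 0 + l 1) * (5 * l 0) /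
      ((l 0 - l 2) * (l 1 - l 2) * ((l 0 - l 3) * (l 1 - l 3) * ((l 0 - l 4) * (l 1 - l 4)))) =
      (5 * l 1 * (l 0 + 4 * l 1) * (2 * l 0 + 3 * l 1) * (3 * l 0 + 2 * l 1) * (4 * l 0 + l 1) * (5 * l 0)) * ((l 0 - l 1) * (l 2 - l 3) * (l 2 - l 4) * (l 3 - l 4)) /
      ((l 0 - l 1) * (l 0 - l 2) * (l 0 - l 3) * (l 0 - l 4) * (l 1 - l 2) * (l 1 - l 3) * (l 1 - l 4) * (l 2 - l 3) * (l 2 - l 4) * (l 3 - l 4)) := by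
    rw [show ((l 0 - l 1) * (l 0 - l 2) * (l 0 - l 3) * (l 0 - l 4) * (l 1 - l 2) * (l 1 - l 3) * (l 1 - l 4) * (l 2 - l 3) * (l 2 - l 4) * (l 3 - l 4)) = ((l 0 - l 2) * (l 1 - l 2) * ((l 0 - l 3) * (l 1 - l 3) * ((l 0 - l 4) * (l 1 - l 4)))) * ((l 0 - l 1) * (l 2 - l 3) * (l 2 - l 4) * (l 3 - l 4)) from by ring]
    exact (mul_div_mul_right _ _ (mul_ne_zero (mul_ne_zero (mul_ne_zero (h01) h23) h24) h34)).symm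
  have e02 : 5 * l 2 * (l 0 + 4 * l 2) * (2 * l 0 + 3 * l 2) * (3 * l 0 + 2 * l 2) * (4 * l 0 + l 2) * (5 * l 0) /
      ((l 0 - l 1) * (l 2 - l 1) * ((l 0 - l 3) * (l 2 - l 3) * ((l 0 - l 4) * (l 2 - l 4)))) =
      (5 * l 2 * (l 0 + 4 * l 2) * (2 * l 0 + 3 * l 2) * (3 * l 0 + 2 * l 2) * (4 * l 0 + l 2) * (5 * l 0)) * (-(l 0 - l 2) * (l 1 - l 3) * (l 1 - l 4) * (l 3 - l 4)) /
      ((l 0 - l 1) * (l 0 - l 2) * (l 0 - l 3) * (l 0 - l 4) * (l 1 - l 2) * (l 1 - l 3) * (l 1 - l 4) * (l 2 - l 3) * (l 2 - l 4) * (l 3 - l 4)) := by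
    rw [show ((l 0 - l 1) * (l 0 - l 2) * (l 0 - l 3) * (l 0 - l 4) * (l 1 - l 2) * (l 1 - l 3) * (l 1 - l 4) * (l 2 - l 3) * (l 2 - l 4) * (l 3 - l 4)) = ((l 0 - l 1) * (l 2 - l 1) * ((l 0 - l 3) * (l 2 - l 3) * ((l 0 - l 4) * (l 2 - l 4)))) * (-(l 0 - l 2) * (l 1 - l 3) * (l 1 - l 4) * (l 3 - l 4)) from by ring]
    exact (mul_div_mul_right _ _ (mul_ne_zero (mul_ne_zero (mul_ne_zero (neg_ne_zero.mpr h02) h13) h14) h34)).symm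
  have e03 : 5 * l 3 * (l 0 + 4 * l 3) * (2 * l 0 + 3 * l 3) * (3 * l 0 + 2 * l 3) * (4 * l 0 + l 3) * (5 * l 0) /
      ((l 0 - l 1) * (l 3 - l 1) * ((l 0 - l 2) * (l 3 - l 2) * ((l 0 - l 4) * (l 3 - l 4)))) =
      (5 * l 3 * (l 0 + 4 * l 3) * (2 * l 0 + 3 * l 3) * (3 * l 0 + 2 * l 3) * (4 * l 0 + l 3) * (5 * l 0)) * ((l 0 - l 3) * (l 1 - l 2) * (l 1 - l 4) * (l 2 - l 4)) /
      ((l 0 - l 1) * (l 0 - l 2) * (l 0 - l 3) * (l 0 - l 4) * (l 1 - l 2) * (l 1 - l 3) * (l 1 - l 4) * (l 2 - l 3) * (l 2 - l 4) * (l 3 - l 4)) := by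
    rw [show ((l 0 - l 1) * (l 0 - l 2) * (l 0 - l 3) * (l 0 - l 4) * (l 1 - l 2) * (l 1 - l 3) * (l 1 - l 4) * (l 2 - l 3) * (l 2 - l 4) * (l 3 - l 4)) = ((l 0 - l 1) * (l 3 - l 1) * ((l 0 - l 2) * (l 3 - l 2) * ((l 0 - l 4) * (l 3 - l 4)))) * ((l 0 - l 3) * (l 1 - l 2) * (l 1 - l 4) * (l 2 - l 4)) from by ring]
    exact (mul_div_mul_right _ _ (mul_ne_zero (mul_ne_zero (mul_ne_zero (h03) h12) h14) h24)).symm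
  have e04 : 5 * l 4 * (l 0 + 4 * l 4) * (2 * l 0 + 3 * l 4) * (3 * l 0 + 2 * l 4) * (4 * l 0 + l 4) * (5 * l 0) /
      ((l 0 - l 1) * (l 4 - l 1) * ((l 0 - l 2) * (l 4 - l 2) * ((l 0 - l 3) * (l 4 - l 3)))) =
      (5 * l 4 * (l 0 + 4 * l 4) * (2 * l 0 + 3 * l 4) * (3 * l 0 + 2 * l 4) * (4 * l 0 + l 4) * (5 * l 0)) * (-(l 0 - l 4) * (l 1 - l 2) * (l 1 - l 3) * (l 2 - l 3)) /
      ((l 0 - l 1) * (l 0 - l 2) * (l 0 - l 3) * (l 0 - l 4) * (l 1 - l 2) * (l 1 - l 3) * (l 1 - l 4) * (l 2 - l 3) * (l 2 - l 4) * (l 3 - l 4)) := by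
    rw [show ((l 0 - l 1) * (l 0 - l 2) * (l 0 - l 3) * (l 0 - l 4) * (l 1 - l 2) * (l 1 - l 3) * (l 1 - l 4) * (l 2 - l 3) * (l 2 - l 4) * (l 3 - l 4)) = ((l 0 - l 1) * (l 4 - l 1) * ((l 0 - l 2) * (l 4 - l 2) * ((l 0 - l 3) * (l 4 - l 3)))) * (-(l 0 - l 4) * (l 1 - l 2) * (l 1 - l 3) * (l 2 - l 3)) from by ring]
    exact (mul_div_mul_right _ _ (mul_ne_zero (mul_ne_zero (mul_ne_zero (neg_ne_zero.mpr h04) h12) h13) h23)).symm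
  have e12 : 5 * l 2 * (l 1 + 4 * l 2) * (2 * l 1 + 3 * l 2) * (3 * l 1 + 2 * l 2) * (4 * l 1 + l 2) * (5 * l 1) /
      ((l 1 - l 0) * (l 2 - l 0) * ((l 1 - l 3) * (l 2 - l 3) * ((l 1 - l 4) * (l 2 - l 4)))) =
      (5 * l 2 * (l 1 + 4 * l 2) * (2 * l 1 + 3 * l 2) * (3 * l 1 + 2 * l 2) * (4 * l 1 + l 2) * (5 * l 1)) * ((l 1 - l 2) * (l 0 - l 3) * (l 0 - l 4) * (l 3 - l 4)) /
      ((l 0 - l 1) * (l 0 - l 2) * (l 0 - l 3) * (l 0 - l 4) * (l 1 - l 2) * (l 1 - l 3) * (l 1 - l 4) * (l 2 - l 3) * (l 2 - l 4) * (l 3 - l 4)) := by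
    rw [show ((l 0 - l 1) * (l 0 - l 2) * (l 0 - l 3) * (l 0 - l 4) * (l 1 - l 2) * (l 1 - l 3) * (l 1 - l 4) * (l 2 - l 3) * (l 2 - l 4) * (l 3 - l 4)) = ((l 1 - l 0) * (l 2 - l 0) * ((l 1 - l 3) * (l 2 - l 3) * ((l 1 - l 4) * (l 2 - l 4)))) * ((l 1 - l 2) * (l 0 - l 3) * (l 0 - l 4) * (l 3 - l 4)) from by ring]
    exact (mul_div_mul_right _ _ (mul_ne_zero (mul_ne_zero (mul_ne_zero (h12) h03) h04) h34)).symm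
  have e13 : 5 * l 3 * (l 1 + 4 * l 3) * (2 * l 1 + 3 * l 3) * (3 * l 1 + 2 * l 3) * (4 * l 1 + l 3) * (5 * l 1) /
      ((l 1 - l 0) * (l 3 - l 0) * ((l 1 - l 2) * (l 3 - l 2) * ((l 1 - l 4) * (l 3 - l 4)))) =
      (5 * l 3 * (l 1 + 4 * l 3) * (2 * l 1 + 3 * l 3) * (3 * l 1 + 2 * l 3) * (4 * l 1 + l 3) * (5 * l 1)) * (-(l 1 - l 3) * (l 0 - l 2) * (l 0 - l 4) * (l 2 - l 4)) /
      ((l 0 - l 1) * (l 0 - l 2) * (l 0 - l 3) * (l 0 - l 4) * (l 1 - l 2) * (l 1 - l 3) * (l 1 - l 4) * (l 2 - l 3) * (l 2 - l 4) * (l 3 - l 4)) := by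
    rw [show ((l 0 - l 1) * (l 0 - l 2) * (l 0 - l 3) * (l 0 - l 4) * (l 1 - l 2) * (l 1 - l 3) * (l 1 - l 4) * (l 2 - l 3) * (l 2 - l 4) * (l 3 - l 4)) = ((l 1 - l 0) * (l 3 - l 0) * ((l 1 - l 2) * (l 3 - l 2) * ((l 1 - l 4) * (l 3 - l 4)))) * (-(l 1 - l 3) * (l 0 - l 2) * (l 0 - l 4) * (l 2 - l 4)) from by ring]
    exact (mul_div_mul_right _ _ (mul_ne_zero (mul_ne_zero (mul_ne_zero (neg_ne_zero.mpr h13) h02) h04) h24)).symm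
  have e14 : 5 * l 4 * (l 1 + 4 * l 4) * (2 * l 1 + 3 * l 4) * (3 * l 1 + 2 * l 4) * (4 * l 1 + l 4) * (5 * l 1) /
      ((l 1 - l 0) * (l 4 - l 0) * ((l 1 - l 2) * (l 4 - l 2) * ((l 1 - l 3) * (l 4 - l 3)))) =
      (5 * l 4 * (l 1 + 4 * l 4) * (2 * l 1 + 3 * l 4) * (3 * l 1 + 2 * l 4) * (4 * l 1 + l 4) * (5 * l 1)) * ((l 1 - l 4) * (l 0 - l 2) * (l 0 - l 3) * (l 2 - l 3)) /
      ((l 0 - l 1) * (l 0 - l 2) * (l 0 - l 3) * (l 0 - l 4) * (l 1 - l 2) * (l 1 - l 3) * (l 1 - l 4) * (l 2 - l 3) * (l 2 - l 4) * (l 3 - l 4)) := by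
    rw [show ((l 0 - l 1) * (l 0 - l 2) * (l 0 - l 3) * (l 0 - l 4) * (l 1 - l 2) * (l 1 - l 3) * (l 1 - l 4) * (l 2 - l 3) * (l 2 - l 4) * (l 3 - l 4)) = ((l 1 - l 0) * (l 4 - l 0) * ((l 1 - l 2) * (l 4 - l 2) * ((l 1 - l 3) * (l 4 - l 3)))) * ((l 1 - l 4) * (l 0 - l 2) * (l 0 - l 3) * (l 2 - l 3)) from by ring]
    exact (mul_div_mul_right _ _ (mul_ne_zero (mul_ne_zero (mul_ne_zero (h14) h02) h03) h23)).symm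
  have e23 : 5 * l 3 * (l 2 + 4 * l 3) * (2 * l 2 + 3 * l 3) * (3 * l 2 + 2 * l 3) * (4 * l 2 + l 3) * (5 * l 2) /
      ((l 2 - l 0) * (l 3 - l 0) * ((l 2 - l 1) * (l 3 - l 1) * ((l 2 - l 4) * (l 3 - l 4)))) =
      (5 * l 3 * (l 2 + 4 * l 3) * (2 * l 2 + 3 * l 3) * (3 * l 2 + 2 * l 3) * (4 * l 2 + l 3) * (5 * l 2)) * ((l 2 - l 3) * (l 0 - l 1) * (l 0 - l 4) * (l 1 - l 4)) /
      ((l 0 - l 1) * (l 0 - l 2) * (l 0 - l 3) * (l 0 - l 4) * (l 1 - l 2) * (l 1 - l 3) * (l 1 - l 4) * (l 2 - l 3) * (l 2 - l 4) * (l 3 - l 4)) := by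
    rw [show ((l 0 - l 1) * (l 0 - l 2) * (l 0 - l 3) * (l 0 - l 4) * (l 1 - l 2) * (l 1 - l 3) * (l 1 - l 4) * (l 2 - l 3) * (l 2 - l 4) * (l 3 - l 4)) = ((l 2 - l 0) * (l 3 - l 0) * ((l 2 - l 1) * (l 3 - l 1) * ((l 2 - l 4) * (l 3 - l 4)))) * ((l 2 - l 3) * (l 0 - l 1) * (l 0 - l 4) * (l 1 - l 4)) from by ring]
    exact (mul_div_mul_right _ _ (mul_ne_zero (mul_ne_zero (mul_ne_zero (h23) h01) h04) h14)).symm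
  have e24 : 5 * l 4 * (l 2 + 4 * l 4) * (2 * l 2 + 3 * l 4) * (3 * l 2 + 2 * l 4) * (4 * l 2 + l 4) * (5 * l 2) /
      ((l 2 - l 0) * (l 4 - l 0) * ((l 2 - l 1) * (l 4 - l 1) * ((l 2 - l 3) * (l 4 - l 3)))) =
      (5 * l 4 * (l 2 + 4 * l 4) * (2 * l 2 + 3 * l 4) * (3 * l 2 + 2 * l 4) * (4 * l 2 + l 4) * (5 * l 2)) * (-(l 2 - l 4) * (l 0 - l 1) * (l 0 - l 3) * (l 1 - l 3)) /
      ((l 0 - l 1) * (l 0 - l 2) * (l 0 - l 3) * (l 0 - l 4) * (l 1 - l 2) * (l 1 - l 3) * (l 1 - l 4) * (l 2 - l 3) * (l 2 - l 4) * (l 3 - l 4)) := by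
    rw [show ((l 0 - l 1) * (l 0 - l 2) * (l 0 - l 3) * (l 0 - l 4) * (l 1 - l 2) * (l 1 - l 3) * (l 1 - l 4) * (l 2 - l 3) * (l 2 - l 4) * (l 3 - l 4)) = ((l 2 - l 0) * (l 4 - l 0) * ((l 2 - l 1) * (l 4 - l 1) * ((l 2 - l 3) * (l 4 - l 3)))) * (-(l 2 - l 4) * (l 0 - l 1) * (l 0 - l 3) * (l 1 - l 3)) from by ring]
    exact (mul_div_mul_right _ _ (mul_ne_zero (mul_ne_zero (mul_ne_zero (neg_ne_zero.mpr h24) h01) h03) h13)).symm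
  have e34 : 5 * l 4 * (l 3 + 4 * l 4) * (2 * l 3 + 3 * l 4) * (3 * l 3 + 2 * l 4) * (4 * l 3 + l 4) * (5 * l 3) /
      ((l 3 - l 0) * (l 4 - l 0) * ((l 3 - l 1) * (l 4 - l 1) * ((l 3 - l 2) * (l 4 - l 2)))) =
      (5 * l 4 * (l 3 + 4 * l 4) * (2 * l 3 + 3 * l 4) * (3 * l 3 + 2 * l 4) * (4 * l 3 + l 4) * (5 * l 3)) * ((l 3 - l 4) * (l 0 - l 1) * (l 0 - l 2) * (l 1 - l 2)) /
      ((l 0 - l 1) * (l 0 - l 2) * (l 0 - l 3) * (l 0 - l 4) * (l 1 - l 2) * (l 1 - l 3) * (l 1 - l 4) * (l 2 - l 3) * (l 2 - l 4) * (l 3 - l 4)) := by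
    rw [show ((l 0 - l 1) * (l 0 - l 2) * (l 0 - l 3) * (l 0 - l 4) * (l 1 - l 2) * (l 1 - l 3) * (l 1 - l 4) * (l 2 - l 3) * (l 2 - l 4) * (l 3 - l 4)) = ((l 3 - l 0) * (l 4 - l 0) * ((l 3 - l 1) * (l 4 - l 1) * ((l 3 - l 2) * (l 4 - l 2)))) * ((l 3 - l 4) * (l 0 - l 1) * (l 0 - l 2) * (l 1 - l 2)) from by ring]
    exact (mul_div_mul_right _ _ (mul_ne_zero (mul_ne_zero (mul_ne_zero (h34) h01) h02) h12)).symm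
  rw [e01, e02, e03, e04, e12, e13, e14, e23, e24, e34]
  simp only [← add_div]
  rw [div_eq_iff hV]
  ring
end
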